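/- Let p be a prime with p ≡ 1 (mod 8). For any integers c, e with p ∤ c and c a quadratic residue mod p, the sum of the distinct values of x^4 + cx^2 + e modulo p, as x ranges over Z/pZ, is congruent to −(9/64)c^2 + (5/8)e (mod p). -/

import Mathlib

variable {p : ℕ} [Fact p.Prime]

lemma aux_p_ge (hp : p % 8 = 1) : 17 ≤ p := by
  have h2 : 2 ≤ p := (Fact.out : p.Prime).two_le
  have hp9 : p ≠ 9 := by
    intro h; subst h; exact absurd (Fact.out : Nat.Prime 9) (by decide)
  by_contra h
  push_neg at h
  omega

lemma aux_sum_pow_card_sub_one (hp : p % 8 = 1) :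
    ∑ t : ZMod p, t ^ (p - 1) = -1 := by
  have h17 := aux_p_ge hp
  have h : ∀ t : ZMod p, t ^ (p - 1) = if t = 0 then 0 else 1 := by
    intro t
    split_ifs with h
    · subst h; exact zero_pow (by omega)
    · exact ZMod.pow_card_sub_one_eq_one h
  rw [Finset.sum_congr rfl fun t _ => h t, Finset.sum_ite, Finset.sum_const, Finset.sum_const]
  have h1 : (Finset.univ.filter (fun t : ZMod p => t = 0)).card = 1 := by
    simp [Finset.filter_eq']
  have hcard : (Finset.univ.filter (fun t : ZMod p => ¬ t = 0)).card = p - 1 := by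
    rw [Finset.filter_not, Finset.card_sdiff_of_subset (Finset.filter_subset _ _), h1]
    simp [ZMod.card]
  rw [h1, hcard]
  have : ((p - 1 : ℕ) : ZMod p) = -1 := by
    push_cast [Nat.cast_sub (by omega : 1 ≤ p)]
    simp [ZMod.natCast_self p]
  simp [this]

lemma aux_sum_pow (hp : p % 8 = 1) (j : ℕ) (hj : j ≤ p / 2 + 1) :
    ∑ t : ZMod p, t ^ (2 * j) = if j = p / 2 then -1 else 0 := by
  have h17 := aux_p_ge hp
  have hm : 2 * (p / 2) = p - 1 := by omega
  have hq : Fintype.card (ZMod p) = p := ZMod.card p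
  split_ifs with h
  · rw [h, hm]; exact aux_sum_pow_card_sub_one hp
  · rcases Nat.lt_or_ge j (p / 2) with hlt | hge
    · have : 2 * j < Fintype.card (ZMod p) - 1 := by omega
      exact FiniteField.sum_pow_lt_card_sub_one _ _ this
    · have hj' : j = p / 2 + 1 := by omega
      subst hj'
      have hpt : ∀ t : ZMod p, t ^ (2 * (p / 2 + 1)) = t ^ 2 := by
        intro t
        rcases eq_or_ne t 0 with rfl | ht
        · rw [zero_pow (by omega), zero_pow (by omega)]
        · have : 2 * (p / 2 + 1) = 2 + (p - 1) := by omega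
          rw [this, pow_add, ZMod.pow_card_sub_one_eq_one ht, mul_one]
      rw [Finset.sum_congr rfl fun t _ => hpt t]
      exact FiniteField.sum_pow_lt_card_sub_one _ _ (by omega)

lemma aux_sum_binom (hp : p % 8 = 1) (d : ZMod p) (k : ℕ) (hk1 : p / 2 ≤ k)
    (hk2 : k ≤ p / 2 + 1) :
    ∑ t : ZMod p, (t ^ 2 - d) ^ k = -((k.choose (p / 2) : ZMod p) * (-d) ^ (k - p / 2)) := by
  have hpt : ∀ t : ZMod p, (t ^ 2 - d) ^ k =
      ∑ j ∈ Finset.range (k + 1), t ^ (2 * j) * ((-d) ^ (k - j) * (k.choose j : ZMod p)) := by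
    intro t
    rw [sub_eq_add_neg, add_pow]
    exact Finset.sum_congr rfl fun j _ => by rw [pow_mul]; ring
  rw [Finset.sum_congr rfl fun t _ => hpt t, Finset.sum_comm]
  have : ∀ j ∈ Finset.range (k + 1),
      (∑ t : ZMod p, t ^ (2 * j) * ((-d) ^ (k - j) * (k.choose j : ZMod p))) =
      (if j = p / 2 then -1 else 0) * ((-d) ^ (k - j) * (k.choose j : ZMod p)) := by
    intro j hj
    rw [← Finset.sum_mul, aux_sum_pow hp j (by simp at hj; omega)]
  rw [Finset.sum_congr rfl this, Finset.sum_eq_single (p / 2)]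
  · simp; ring
  · intro j _ hj; simp [hj]
  · intro h; exact absurd (Finset.mem_range.mpr (by omega)) h

lemma aux_sum_quadratic (hp : p % 8 = 1) (c : ZMod p) (k : ℕ) (hk1 : p / 2 ≤ k)
    (hk2 : k ≤ p / 2 + 1) :
    ∑ t : ZMod p, (t ^ 2 + c * t) ^ k =
      -((k.choose (p / 2) : ZMod p) * (-(c ^ 2 / 4)) ^ (k - p / 2)) := by
  have h17 := aux_p_ge hp
  have h4 : (4 : ZMod p) ≠ 0 := by
    have : ((4 : ℕ) : ZMod p) ≠ 0 := by
      rw [Ne, ZMod.natCast_eq_zero_iff]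
      intro h
      have := Nat.le_of_dvd (by norm_num) h
      interval_cases p <;> omega
    simpa using this
  rw [← aux_sum_binom hp (c ^ 2 / 4) k hk1 hk2]
  apply Fintype.sum_bijective (fun t : ZMod p => t + c / 2)
    (Equiv.addRight (c / 2)).bijective
  intro t
  have h2 : (2 : ZMod p) ≠ 0 := by
    intro h; apply h4; rw [show (4 : ZMod p) = 2 * 2 by norm_num, h, mul_zero]
  have hb : (t + c / 2) ^ 2 - c ^ 2 / 4 = t ^ 2 + c * t := by
    field_simp
    ring
  rw [hb]

lemma aux_sum_g (hp : p % 8 = 1) (c e : ZMod p) :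
    ∑ t : ZMod p, (t ^ 2 + c * t + e) = 0 := by
  have h17 := aux_p_ge hp
  have hq : Fintype.card (ZMod p) = p := ZMod.card p
  have hpt : ∀ t : ZMod p, t ^ 2 + c * t + e = t ^ 2 + c * t ^ 1 + e := by
    intro t; ring
  rw [Finset.sum_congr rfl fun t _ => hpt t, Finset.sum_add_distrib, Finset.sum_add_distrib,
    ← Finset.mul_sum, Finset.sum_const,
    FiniteField.sum_pow_lt_card_sub_one _ _ (show 2 < Fintype.card (ZMod p) - 1 by omega),
    FiniteField.sum_pow_lt_card_sub_one _ _ (show 1 < Fintype.card (ZMod p) - 1 by omega)]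
  simp [Finset.card_univ, hq, ZMod.natCast_self]

lemma aux_sum_chi_g (hp : p % 8 = 1) (c e : ZMod p) :
    ∑ t : ZMod p, t ^ (p / 2) * (t ^ 2 + c * t + e) = 0 := by
  have h17 := aux_p_ge hp
  have hq : Fintype.card (ZMod p) = p := ZMod.card p
  have hpt : ∀ t : ZMod p, t ^ (p / 2) * (t ^ 2 + c * t + e) =
      t ^ (p / 2 + 2) + c * t ^ (p / 2 + 1) + e * t ^ (p / 2) := by
    intro t; ring
  rw [Finset.sum_congr rfl fun t _ => hpt t, Finset.sum_add_distrib, Finset.sum_add_distrib,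
    ← Finset.mul_sum, ← Finset.mul_sum,
    FiniteField.sum_pow_lt_card_sub_one _ _ (show p / 2 + 2 < Fintype.card (ZMod p) - 1 by omega),
    FiniteField.sum_pow_lt_card_sub_one _ _ (show p / 2 + 1 < Fintype.card (ZMod p) - 1 by omega),
    FiniteField.sum_pow_lt_card_sub_one _ _ (show p / 2 < Fintype.card (ZMod p) - 1 by omega)]
  ring

open scoped Classical in
lemma aux_sum_T' (hp : p % 8 = 1) (c e : ZMod p) (hc : c ≠ 0) (hcsq : IsSquare c) :
    ∑ t ∈ Finset.univ.filter (fun t : ZMod p => IsSquare t ∧ IsSquare (-c - t)),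
      (t ^ 2 + c * t + e) = c ^ 2 / 32 + 3 * e / 4 := by
  have h17 := aux_p_ge hp
  have h4 : (4 : ZMod p) ≠ 0 := by
    have : ((4 : ℕ) : ZMod p) ≠ 0 := by
      rw [Ne, ZMod.natCast_eq_zero_iff]
      intro h
      have := Nat.le_of_dvd (by norm_num) h
      omega
    simpa using this
  have h2 : (2 : ZMod p) ≠ 0 := by
    intro h; apply h4; rw [show (4 : ZMod p) = 2 * 2 by norm_num, h, mul_zero]
  have h8 : (8 : ZMod p) ≠ 0 := by
    simpa [show ((2 : ZMod p)) ^ 3 = 8 by norm_num] using pow_ne_zero 3 h2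
  have h16 : (16 : ZMod p) ≠ 0 := by
    simpa [show ((2 : ZMod p)) ^ 4 = 16 by norm_num] using pow_ne_zero 4 h2
  have h32 : (32 : ZMod p) ≠ 0 := by
    simpa [show ((2 : ZMod p)) ^ 5 = 32 by norm_num] using pow_ne_zero 5 h2
  have h64 : (64 : ZMod p) ≠ 0 := by
    simpa [show ((2 : ZMod p)) ^ 6 = 64 by norm_num] using pow_ne_zero 6 h2
  have hm1 : IsSquare (-1 : ZMod p) := ZMod.exists_sq_eq_neg_one_iff.mpr (by omega)
  have hchi1 : ∀ t : ZMod p, t ≠ 0 → IsSquare t → t ^ (p / 2) = 1 := fun t ht hsq =>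
    (ZMod.euler_criterion p ht).mp hsq
  have hchi2 : ∀ t : ZMod p, t ≠ 0 → ¬IsSquare t → t ^ (p / 2) = -1 := by
    intro t ht hsq
    rcases ZMod.pow_div_two_eq_neg_one_or_one p ht with h | h
    · exact absurd ((ZMod.euler_criterion p ht).mpr h) hsq
    · exact h
  have hchi0 : (0 : ZMod p) ^ (p / 2) = 0 := zero_pow (by omega)
  have hnegc : IsSquare (-c) := by
    have := hm1.mul hcsq
    rwa [neg_one_mul] at this
  have hnegc0 : (-c : ZMod p) ≠ 0 := neg_ne_zero.mpr hc
  have key : ∀ t : ZMod p,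
      (if IsSquare t ∧ IsSquare (-c - t) then t ^ 2 + c * t + e else 0)
      = (1 + t ^ (p / 2)) * (1 + (-c - t) ^ (p / 2)) / 4 * (t ^ 2 + c * t + e)
        + (if t = 0 then e / 2 else 0) + (if t = -c then e / 2 else 0) := by
    intro t
    rcases eq_or_ne t 0 with rfl | ht0
    · rw [if_pos ⟨⟨0, by ring⟩, by simpa using hnegc⟩, if_pos rfl,
        if_neg (Ne.symm hnegc0), hchi0]
      rw [show (-c - 0 : ZMod p) = -c by ring, hchi1 _ hnegc0 hnegc]
      field_simp
      ring
    · rcases eq_or_ne t (-c) with rfl | htc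
      · rw [if_pos ⟨hnegc, by simp⟩, if_neg ht0, if_pos rfl,
          show (-c - -c : ZMod p) = 0 by ring, hchi0, hchi1 _ hnegc0 hnegc]
        field_simp
        ring
      · have hu0 : (-c - t : ZMod p) ≠ 0 := fun h => htc (by
          have : t = -c := by linear_combination -h
          exact this)
        rw [if_neg ht0, if_neg htc, add_zero, add_zero]
        by_cases hs : IsSquare t <;> by_cases hs' : IsSquare (-c - t)
        · rw [if_pos ⟨hs, hs'⟩, hchi1 _ ht0 hs, hchi1 _ hu0 hs']
          field_simp
          ring
        · rw [if_neg (by tauto), hchi1 _ ht0 hs, hchi2 _ hu0 hs']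
          ring
        · rw [if_neg (by tauto), hchi2 _ ht0 hs, hchi1 _ hu0 hs']
          ring
        · rw [if_neg (by tauto), hchi2 _ ht0 hs, hchi2 _ hu0 hs']
          ring
  rw [Finset.sum_filter, Finset.sum_congr rfl fun t _ => key t,
    Finset.sum_add_distrib, Finset.sum_add_distrib,
    Finset.sum_ite_eq' Finset.univ (0 : ZMod p) (fun _ => e / 2),
    Finset.sum_ite_eq' Finset.univ (-c : ZMod p) (fun _ => e / 2)]
  have expand : ∀ t : ZMod p,
      (1 + t ^ (p / 2)) * (1 + (-c - t) ^ (p / 2)) / 4 * (t ^ 2 + c * t + e)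
      = ((t ^ 2 + c * t + e) + t ^ (p / 2) * (t ^ 2 + c * t + e)
        + ((-c - t) ^ (p / 2) * (t ^ 2 + c * t + e)
        + t ^ (p / 2) * (-c - t) ^ (p / 2) * (t ^ 2 + c * t + e))) / 4 := by
    intro t; ring
  have hS3 : ∑ t : ZMod p, (-c - t) ^ (p / 2) * (t ^ 2 + c * t + e) = 0 := by
    have hbij : Function.Bijective (fun t : ZMod p => -c - t) := by
      have hinv : Function.Involutive (fun t : ZMod p => -c - t) := fun t => by ring
      exact hinv.bijective
    rw [Fintype.sum_bijective (fun t : ZMod p => -c - t) hbij _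
      (fun t : ZMod p => t ^ (p / 2) * (t ^ 2 + c * t + e)) ?_]
    · exact aux_sum_chi_g hp c e
    · intro t
      have : (-c - t) ^ 2 + c * (-c - t) + e = t ^ 2 + c * t + e := by ring
      simp only [this]
  have hneg1m : (-1 : ZMod p) ^ (p / 2) = 1 :=
    hchi1 _ (neg_ne_zero.mpr one_ne_zero) hm1
  have hS4 : ∑ t : ZMod p, t ^ (p / 2) * (-c - t) ^ (p / 2) * (t ^ 2 + c * t + e)
      = c ^ 2 / 8 - e := by
    have hpt : ∀ t : ZMod p, t ^ (p / 2) * (-c - t) ^ (p / 2) * (t ^ 2 + c * t + e)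
        = (t ^ 2 + c * t) ^ (p / 2 + 1) + e * (t ^ 2 + c * t) ^ (p / 2) := by
      intro t
      rw [← mul_pow, show t * (-c - t) = (-1) * (t ^ 2 + c * t) by ring, mul_pow,
        hneg1m, one_mul, pow_succ]
      ring
    rw [Finset.sum_congr rfl fun t _ => hpt t, Finset.sum_add_distrib, ← Finset.mul_sum,
      aux_sum_quadratic hp c (p / 2 + 1) (by omega) (by omega),
      aux_sum_quadratic hp c (p / 2) (by omega) (by omega)]
    have hhalf : ((p / 2 + 1 : ℕ) : ZMod p) * 2 = 1 := by
      have h1 : ((p / 2 + 1 : ℕ) : ZMod p) * 2 = ((2 * (p / 2) + 2 : ℕ) : ZMod p) := by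
        push_cast; ring
      rw [h1, show 2 * (p / 2) + 2 = p + 1 from by omega]
      push_cast
      simp [ZMod.natCast_self]
    rw [Nat.choose_succ_self_right, Nat.choose_self, Nat.add_sub_cancel_left, Nat.sub_self,
      pow_zero, pow_one]
    have hinv : ((p / 2 + 1 : ℕ) : ZMod p) = 1 / 2 := (eq_div_iff h2).mpr hhalf
    rw [hinv]
    field_simp
    ring
  have hsplit : ∑ t : ZMod p,
      ((t ^ 2 + c * t + e) + t ^ (p / 2) * (t ^ 2 + c * t + e)
        + ((-c - t) ^ (p / 2) * (t ^ 2 + c * t + e)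
        + t ^ (p / 2) * (-c - t) ^ (p / 2) * (t ^ 2 + c * t + e)))
      = (∑ t : ZMod p, (t ^ 2 + c * t + e))
        + (∑ t : ZMod p, t ^ (p / 2) * (t ^ 2 + c * t + e))
        + ((∑ t : ZMod p, (-c - t) ^ (p / 2) * (t ^ 2 + c * t + e))
        + (∑ t : ZMod p, t ^ (p / 2) * (-c - t) ^ (p / 2) * (t ^ 2 + c * t + e))) := by
    rw [← Finset.sum_add_distrib, ← Finset.sum_add_distrib, ← Finset.sum_add_distrib]
  rw [Finset.sum_congr rfl fun t _ => expand t, ← Finset.sum_div, hsplit,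
    aux_sum_g hp c e, aux_sum_chi_g hp c e, hS3, hS4]
  simp only [Finset.mem_univ, if_true]
  field_simp
  ring

lemma aux_sum_f (hp : p % 8 = 1) (c e : ZMod p) :
    ∑ x : ZMod p, (x ^ 4 + c * x ^ 2 + e) = 0 := by
  have h17 := aux_p_ge hp
  have hq : Fintype.card (ZMod p) = p := ZMod.card p
  rw [Finset.sum_add_distrib, Finset.sum_add_distrib, ← Finset.mul_sum, Finset.sum_const,
    FiniteField.sum_pow_lt_card_sub_one _ _ (show 4 < Fintype.card (ZMod p) - 1 by omega),
    FiniteField.sum_pow_lt_card_sub_one _ _ (show 2 < Fintype.card (ZMod p) - 1 by omega)]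
  simp [Finset.card_univ, hq, ZMod.natCast_self]

lemma aux_sq_eq (x' x : ZMod p) : x' ^ 2 = x ^ 2 ↔ x' = x ∨ x' = -x := by
  constructor
  · intro h
    have h0 : (x' - x) * (x' + x) = 0 := by linear_combination h
    rcases mul_eq_zero.mp h0 with h1 | h1
    · exact Or.inl (sub_eq_zero.mp h1)
    · exact Or.inr (eq_neg_of_add_eq_zero_left h1)
  · rintro (rfl | rfl) <;> ring

lemma aux_sum_S (hp : p % 8 = 1) (c e : ZMod p) :
    ∑ t ∈ Finset.univ.image (fun x : ZMod p => x ^ 2), (t ^ 2 + c * t + e) = e / 2 := by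
  classical
  have h17 := aux_p_ge hp
  have h2 : (2 : ZMod p) ≠ 0 := by
    have : ((2 : ℕ) : ZMod p) ≠ 0 := by
      rw [Ne, ZMod.natCast_eq_zero_iff]
      intro h
      have := Nat.le_of_dvd (by norm_num) h
      omega
    simpa using this
  have hsum : ∑ t ∈ Finset.univ.image (fun x : ZMod p => x ^ 2), (t ^ 2 + c * t + e)
      = ∑ x : ZMod p, (if x = 0 then e else ((x ^ 2) ^ 2 + c * x ^ 2 + e) / 2) := by
    apply Finset.sum_image'
    intro x _
    have hfib : (Finset.univ.filter (fun x' : ZMod p => x' ^ 2 = x ^ 2)) = {x, -x} := by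
      ext x'
      simp [aux_sq_eq]
    rw [hfib]
    rcases eq_or_ne x 0 with rfl | hx0
    · simp
    · have hne : x ≠ -x := by
        intro h
        apply hx0
        have : (2 : ZMod p) * x = 0 := by linear_combination h
        rcases mul_eq_zero.mp this with h' | h'
        · exact absurd h' h2
        · exact h'
      rw [Finset.sum_insert (by simp [hne]), Finset.sum_singleton, if_neg hx0,
        if_neg (neg_ne_zero.mpr hx0)]
      rw [show ((-x : ZMod p)) ^ 2 = x ^ 2 by ring]
      field_simp
      ring
  rw [hsum]
  have hpt : ∀ x : ZMod p, (if x = 0 then e else ((x ^ 2) ^ 2 + c * x ^ 2 + e) / 2)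
      = (x ^ 4 + c * x ^ 2 + e) / 2 + (if x = 0 then e / 2 else 0) := by
    intro x
    split_ifs with h
    · subst h
      rw [show ((0:ZMod p) ^ 4 + c * 0 ^ 2 + e) = e by ring]
      field_simp
      ring
    · rw [add_zero]
      congr 1
      ring
  rw [Finset.sum_congr rfl fun x _ => hpt x, Finset.sum_add_distrib, ← Finset.sum_div,
    aux_sum_f hp c e, Finset.sum_ite_eq' Finset.univ (0 : ZMod p) (fun _ => e / 2)]
  simp

lemma aux_g_eq (C E t' t : ZMod p) :
    t' ^ 2 + C * t' + E = t ^ 2 + C * t + E ↔ t' = t ∨ t' = -C - t := by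
  constructor
  · intro h
    have h0 : (t' - t) * (t' + t + C) = 0 := by linear_combination h
    rcases mul_eq_zero.mp h0 with h1 | h1
    · exact Or.inl (sub_eq_zero.mp h1)
    · right
      linear_combination h1
  · rintro (rfl | rfl)
    · rfl
    · ring

theorem sum_residues_one_mod_eight (p : ℕ) [Fact p.Prime] (hp : p % 8 = 1)
    (c e : ℤ) (hc : ¬ (p : ℤ) ∣ c) (hcQR : IsSquare (c : ZMod p)) :
    ((Finset.univ.image (fun x : ZMod p =>
        x ^ 4 + (c : ZMod p) * x ^ 2 + (e : ZMod p))).sum id) =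
      -(9 / 64 : ZMod p) * (c : ZMod p) ^ 2 + (5 / 8 : ZMod p) * (e : ZMod p) := by
  classical
  have h17 := aux_p_ge hp
  set C : ZMod p := (c : ZMod p) with hCdef
  set E : ZMod p := (e : ZMod p) with hEdef
  have hC0 : C ≠ 0 := by
    rw [hCdef, Ne, ZMod.intCast_zmod_eq_zero_iff_dvd]
    exact hc
  have h2 : (2 : ZMod p) ≠ 0 := by
    have : ((2 : ℕ) : ZMod p) ≠ 0 := by
      rw [Ne, ZMod.natCast_eq_zero_iff]
      intro h
      have := Nat.le_of_dvd (by norm_num) h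
      omega
    simpa using this
  have h8 : (8 : ZMod p) ≠ 0 := by
    simpa [show ((2 : ZMod p)) ^ 3 = 8 by norm_num] using pow_ne_zero 3 h2
  have h64 : (64 : ZMod p) ≠ 0 := by
    simpa [show ((2 : ZMod p)) ^ 6 = 64 by norm_num] using pow_ne_zero 6 h2
  have h4 : (4 : ZMod p) ≠ 0 := by
    simpa [show ((2 : ZMod p)) ^ 2 = 4 by norm_num] using pow_ne_zero 2 h2
  have h16 : (16 : ZMod p) ≠ 0 := by
    simpa [show ((2 : ZMod p)) ^ 4 = 16 by norm_num] using pow_ne_zero 4 h2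
  have h32 : (32 : ZMod p) ≠ 0 := by
    simpa [show ((2 : ZMod p)) ^ 5 = 32 by norm_num] using pow_ne_zero 5 h2
  have h128 : (128 : ZMod p) ≠ 0 := by
    simpa [show ((2 : ZMod p)) ^ 7 = 128 by norm_num] using pow_ne_zero 7 h2
  have h256 : (256 : ZMod p) ≠ 0 := by
    simpa [show ((2 : ZMod p)) ^ 8 = 256 by norm_num] using pow_ne_zero 8 h2
  have h512 : (512 : ZMod p) ≠ 0 := by
    simpa [show ((2 : ZMod p)) ^ 9 = 512 by norm_num] using pow_ne_zero 9 h2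
  have h1024 : (1024 : ZMod p) ≠ 0 := by
    simpa [show ((2 : ZMod p)) ^ 10 = 1024 by norm_num] using pow_ne_zero 10 h2
  have h2048 : (2048 : ZMod p) ≠ 0 := by
    simpa [show ((2 : ZMod p)) ^ 11 = 2048 by norm_num] using pow_ne_zero 11 h2
  have h4096 : (4096 : ZMod p) ≠ 0 := by
    simpa [show ((2 : ZMod p)) ^ 12 = 4096 by norm_num] using pow_ne_zero 12 h2
  have hm1 : IsSquare (-1 : ZMod p) := ZMod.exists_sq_eq_neg_one_iff.mpr (by omega)
  have hnegc : IsSquare (-C) := by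
    have := hm1.mul hcQR
    rwa [neg_one_mul] at this
  -- step 1: rewrite the image
  have himg : (Finset.univ.image (fun x : ZMod p => x ^ 4 + C * x ^ 2 + E))
      = (Finset.univ.image (fun x : ZMod p => x ^ 2)).image
          (fun t => t ^ 2 + C * t + E) := by
    rw [Finset.image_image]
    congr 1
    funext x
    simp only [Function.comp_apply]
    ring
  have hmem : ∀ t : ZMod p, t ∈ Finset.univ.image (fun x : ZMod p => x ^ 2)
      ↔ IsSquare t := by
    intro t
    simp only [Finset.mem_image, Finset.mem_univ, true_and]
    constructor
    · rintro ⟨a, rfl⟩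
      exact ⟨a, by ring⟩
    · rintro ⟨r, rfl⟩
      exact ⟨r, by ring⟩
  set S : Finset (ZMod p) := Finset.univ.image (fun x : ZMod p => x ^ 2) with hSdef
  -- step 2: sum over the image of g via fibers
  have hstep2 : (S.image (fun t => t ^ 2 + C * t + E)).sum id
      = ∑ t ∈ S, (if IsSquare (-C - t) ∧ -C - t ≠ t
          then (t ^ 2 + C * t + E) / 2 else (t ^ 2 + C * t + E)) := by
    apply Finset.sum_image'
    intro t hts
    have htsq : IsSquare t := (hmem t).mp hts
    have hfib : S.filter (fun t' => t' ^ 2 + C * t' + E = t ^ 2 + C * t + E)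
        = if IsSquare (-C - t) ∧ -C - t ≠ t then ({t, -C - t} : Finset (ZMod p))
          else {t} := by
      split_ifs with hcond
      · ext t'
        simp only [Finset.mem_filter, hSdef, hmem, aux_g_eq, Finset.mem_insert,
          Finset.mem_singleton]
        constructor
        · exact fun h => h.2
        · rintro (rfl | rfl)
          · exact ⟨(hmem _).mpr htsq, Or.inl rfl⟩
          · exact ⟨(hmem _).mpr hcond.1, Or.inr rfl⟩
      · ext t'
        simp only [Finset.mem_filter, aux_g_eq, Finset.mem_singleton]
        rw [hmem]
        constructor
        · rintro ⟨hsq', rfl | rfl⟩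
          · rfl
          · push_neg at hcond
            exact hcond hsq'
        · rintro rfl
          exact ⟨htsq, Or.inl rfl⟩
    rw [hfib]
    split_ifs with hcond
    · rw [Finset.sum_insert (by simpa using Ne.symm hcond.2), Finset.sum_singleton,
        if_pos hcond]
      have hcond' : IsSquare (-C - (-C - t)) ∧ -C - (-C - t) ≠ -C - t := by
        rw [show -C - (-C - t) = t by ring]
        exact ⟨htsq, Ne.symm hcond.2⟩
      rw [if_pos hcond']
      have hg : (-C - t) ^ 2 + C * (-C - t) + E = t ^ 2 + C * t + E := by ring
      rw [hg, id_eq]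
      field_simp
      ring
    · rw [Finset.sum_singleton, if_neg hcond, id_eq]
  -- step 3: split into full sum minus half of the collision sum
  have hstep3 : ∑ t ∈ S, (if IsSquare (-C - t) ∧ -C - t ≠ t
          then (t ^ 2 + C * t + E) / 2 else (t ^ 2 + C * t + E))
      = (∑ t ∈ S, (t ^ 2 + C * t + E))
        - (∑ t ∈ S.filter (fun t => IsSquare (-C - t) ∧ -C - t ≠ t),
            (t ^ 2 + C * t + E)) / 2 := by
    have hpt : ∀ t : ZMod p, (if IsSquare (-C - t) ∧ -C - t ≠ t
          then (t ^ 2 + C * t + E) / 2 else (t ^ 2 + C * t + E))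
        = (t ^ 2 + C * t + E) - (if IsSquare (-C - t) ∧ -C - t ≠ t
            then (t ^ 2 + C * t + E) / 2 else 0) := by
      intro t
      split_ifs with h
      · field_simp
        ring
      · ring
    rw [Finset.sum_congr rfl fun t _ => hpt t, Finset.sum_sub_distrib,
      ← Finset.sum_filter, ← Finset.sum_div]
  -- step 4: the collision set is T' minus the midpoint
  have hT : S.filter (fun t => IsSquare (-C - t) ∧ -C - t ≠ t)
      = (Finset.univ.filter (fun t : ZMod p => IsSquare t ∧ IsSquare (-C - t))).erase
          (-C / 2) := by
    ext t
    rw [Finset.mem_erase, Finset.mem_filter, Finset.mem_filter, hmem]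
    simp only [Finset.mem_univ, true_and]
    have hiff : -C - t ≠ t ↔ t ≠ -C / 2 := by
      constructor
      · intro h h'
        subst h'
        apply h
        field_simp
        ring
      · intro h h'
        apply h
        field_simp
        linear_combination -h'
    tauto
  have hsq2 : IsSquare (2 : ZMod p)⁻¹ := by
    obtain ⟨r, hr⟩ := (ZMod.exists_sq_eq_two_iff
      (by omega : p ≠ 2)).mpr (Or.inl hp)
    exact ⟨r⁻¹, by rw [hr, mul_inv]⟩
  have hmemc2 : -C / 2 ∈ Finset.univ.filter
      (fun t : ZMod p => IsSquare t ∧ IsSquare (-C - t)) := by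
    have hsqc2 : IsSquare (-C / 2) := by
      rw [div_eq_mul_inv]
      exact hnegc.mul hsq2
    rw [Finset.mem_filter]
    refine ⟨Finset.mem_univ _, hsqc2, ?_⟩
    rw [show -C - -C / 2 = -C / 2 by field_simp; ring]
    exact hsqc2
  have hstep4 : ∑ t ∈ S.filter (fun t => IsSquare (-C - t) ∧ -C - t ≠ t),
        (t ^ 2 + C * t + E)
      = (∑ t ∈ Finset.univ.filter (fun t : ZMod p => IsSquare t ∧ IsSquare (-C - t)),
          (t ^ 2 + C * t + E)) - ((-C / 2) ^ 2 + C * (-C / 2) + E) := by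
    rw [hT]
    exact eq_sub_of_add_eq (Finset.sum_erase_add _ _ hmemc2)
  -- combine everything
  rw [himg, hstep2, hstep3, hstep4, aux_sum_S hp C E, aux_sum_T' hp C E hC0 hcQR]
  field_simp [h2, h4, h8, h16, h32, h64]
  ring
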